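/- Under assumptions (II) and (III), the sd×sd matrix (I_d ⊗ a₀²²)·H, whose (j,k) block equals a₀²²·D_{jk}²², is symmetric positive definite. -/

import Mathlib

open Matrix

lemma posDef_of_posSemidef_isUnit_det {n : Type*} [Fintype n] [DecidableEq n]
    {A : Matrix n n ℝ} (h : A.PosSemidef) (hdet : IsUnit A.det) : A.PosDef := by
  refine posDef_iff_dotProduct_mulVec.mpr ⟨h.1, fun x hx => lt_of_le_of_ne (h.dotProduct_mulVec_nonneg x) ?_⟩
  intro h0
  have hAx : A *ᵥ x = 0 := (h.dotProduct_mulVec_zero_iff x).mp h0.symm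
  exact hx (Matrix.mulVec_injective_iff_isUnit.mpr ((Matrix.isUnit_iff_isUnit_det A).mpr hdet) (by simpa using hAx))

/-- Key step in Theorem 4.1(a): under assumptions (II) and (III), the sd × sd matrix
`(I_d ⊗ a₀²²) * H`, whose (j,k) block is `a₀²² * D_{jk}²²`, is symmetric positive definite. -/
theorem stmt_3 (p s d : ℕ) (hp : 1 ≤ p) (hs : 1 ≤ s) (hd : 1 ≤ d)
    (a11 : Matrix (Fin p) (Fin p) ℝ) (a12 : Matrix (Fin p) (Fin s) ℝ)
    (a21 : Matrix (Fin s) (Fin p) ℝ) (a22 : Matrix (Fin s) (Fin s) ℝ)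
    (D21 : Fin d → Fin d → Matrix (Fin s) (Fin p) ℝ)
    (D22 : Fin d → Fin d → Matrix (Fin s) (Fin s) ℝ)
    (a₀ : Matrix (Fin p ⊕ Fin s) (Fin p ⊕ Fin s) ℝ)
    (ha₀ : a₀ = fromBlocks a11 a12 a21 a22)
    (D : Fin d → Fin d → Matrix (Fin p ⊕ Fin s) (Fin p ⊕ Fin s) ℝ)
    (hD : ∀ j k, D j k = fromBlocks 0 0 (D21 j k) (D22 j k))
    (hpd : a₀.PosDef)
    -- (II): the md × md block matrix with (j,k) block a₀ ⬝ D_{jk} is symmetric PSD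
    (hII : (Matrix.of fun (x y : Fin d × (Fin p ⊕ Fin s)) =>
      (a₀ * D x.1 y.1) x.2 y.2).PosSemidef)
    -- (III): the sd × sd block matrix H with (j,k) block D_{jk}²² is invertible
    (H : Matrix (Fin d × Fin s) (Fin d × Fin s) ℝ)
    (hH : H = Matrix.of fun (x y : Fin d × Fin s) => D22 x.1 y.1 x.2 y.2)
    (hIII : IsUnit H.det) :
    ((kroneckerMap (· * ·) (1 : Matrix (Fin d) (Fin d) ℝ) a22) * H).PosDef := by
  -- the target matrix is the principal submatrix of the PSD matrix in (II)
  have key : (kroneckerMap (· * ·) (1 : Matrix (Fin d) (Fin d) ℝ) a22) * H =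
      (Matrix.of fun (x y : Fin d × (Fin p ⊕ Fin s)) =>
        (a₀ * D x.1 y.1) x.2 y.2).submatrix
        (fun z : Fin d × Fin s => (z.1, Sum.inr z.2))
        (fun z : Fin d × Fin s => (z.1, Sum.inr z.2)) := by
    ext ⟨j, i⟩ ⟨k, i'⟩
    have hblock : a₀ * D j k =
        fromBlocks (a12 * D21 j k) (a12 * D22 j k)
          (a22 * D21 j k) (a22 * D22 j k) := by
      rw [ha₀, hD, fromBlocks_multiply]
      simp
    simp only [submatrix_apply, Matrix.of_apply, hblock, fromBlocks_apply₂₂]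
    rw [Matrix.mul_apply, Matrix.mul_apply, hH]
    rw [Fintype.sum_prod_type]
    simp [kroneckerMap_apply, Matrix.one_apply, Finset.sum_ite_eq',
      Finset.mul_sum]
  have hpsd : ((kroneckerMap (· * ·) (1 : Matrix (Fin d) (Fin d) ℝ) a22) * H).PosSemidef := by
    rw [key]; exact hII.submatrix _
  -- det is a unit: det (1 ⊗ a22) * det H, and a22 is positive definite
  have ha22 : a22.PosDef := by
    rw [posDef_iff_dotProduct_mulVec]
    constructor
    · have hh := hpd.1
      rw [ha₀] at hh
      ext i j
      have h2 := congrFun (congrFun hh (Sum.inr i)) (Sum.inr j)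
      simpa [conjTranspose_apply, fromBlocks_apply₂₂] using h2
    · intro x hx
      have hy : (Sum.elim (0 : Fin p → ℝ) x) ≠ 0 := by
        intro h
        apply hx
        ext i
        exact congrFun h (Sum.inr i)
      have := hpd.dotProduct_mulVec_pos hy
      rw [ha₀] at this
      convert this using 1
      simp [dotProduct, Fintype.sum_sum_type, mulVec, fromBlocks,
        Matrix.mul_apply]
  have hdet : IsUnit ((kroneckerMap (· * ·) (1 : Matrix (Fin d) (Fin d) ℝ) a22) * H).det := by
    rw [Matrix.det_mul, Matrix.det_kronecker]
    refine (IsUnit.mul (IsUnit.mul ?_ ?_) hIII)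
    · simp
    · exact (isUnit_iff_ne_zero.mpr (pow_ne_zero _ (ne_of_gt ha22.det_pos)))
  exact posDef_of_posSemidef_isUnit_det hpsd hdet
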